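/- For every d ∈ ℕ there exists a 3-generated subgroup H_d of the d-th direct power of the free group of rank 2 such that H_d contains a free abelian subgroup of rank d. -/

import Mathlib

namespace Stmt11Aux

open Matrix
open scoped commutatorElement

abbrev SL2 := Matrix.SpecialLinearGroup (Fin 2) ℝ

def A : SL2 := ⟨!![1, 1; 0, 1], by norm_num [Matrix.det_fin_two_of]⟩
def B : SL2 := ⟨!![1, 0; 1, 1], by norm_num [Matrix.det_fin_two_of]⟩

lemma A_zpow (n : ℤ) :
    ((A ^ n : SL2) : Matrix (Fin 2) (Fin 2) ℝ) = !![1, (n : ℝ); 0, 1] := by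
  induction n using Int.induction_on with
  | zero => simp [Matrix.one_fin_two]
  | succ n ih =>
      rw [_root_.zpow_add_one, Matrix.SpecialLinearGroup.coe_mul, ih,
        show ((A : SL2) : Matrix (Fin 2) (Fin 2) ℝ) = !![1, 1; 0, 1] from rfl,
        Matrix.mul_fin_two]
      ext i j
      fin_cases i <;> fin_cases j <;> push_cast <;> simp <;> ring
  | pred n ih =>
      rw [_root_.zpow_sub_one, Matrix.SpecialLinearGroup.coe_mul, ih,
        Matrix.SpecialLinearGroup.coe_inv,
        show ((A : SL2) : Matrix (Fin 2) (Fin 2) ℝ) = !![1, 1; 0, 1] from rfl,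
        Matrix.adjugate_fin_two, Matrix.mul_fin_two]
      ext i j
      fin_cases i <;> fin_cases j <;> push_cast <;> simp <;> ring

lemma B_zpow (n : ℤ) :
    ((B ^ n : SL2) : Matrix (Fin 2) (Fin 2) ℝ) = !![1, 0; (n : ℝ), 1] := by
  induction n using Int.induction_on with
  | zero => simp [Matrix.one_fin_two]
  | succ n ih =>
      rw [_root_.zpow_add_one, Matrix.SpecialLinearGroup.coe_mul, ih,
        show ((B : SL2) : Matrix (Fin 2) (Fin 2) ℝ) = !![1, 0; 1, 1] from rfl,
        Matrix.mul_fin_two]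
      ext i j
      fin_cases i <;> fin_cases j <;> push_cast <;> simp <;> ring
  | pred n ih =>
      rw [_root_.zpow_sub_one, Matrix.SpecialLinearGroup.coe_mul, ih,
        Matrix.SpecialLinearGroup.coe_inv,
        show ((B : SL2) : Matrix (Fin 2) (Fin 2) ℝ) = !![1, 0; 1, 1] from rfl,
        Matrix.adjugate_fin_two, Matrix.mul_fin_two]
      ext i j
      fin_cases i <;> fin_cases j <;> push_cast <;> simp <;> ring

lemma det_rel (M : SL2) :
    (M : Matrix (Fin 2) (Fin 2) ℝ) 0 0 * (M : Matrix (Fin 2) (Fin 2) ℝ) 1 1 -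
      (M : Matrix (Fin 2) (Fin 2) ℝ) 0 1 * (M : Matrix (Fin 2) (Fin 2) ℝ) 1 0 = 1 := by
  have h := M.2
  rwa [Matrix.det_fin_two] at h

local notation "ent" M:max i:max j:max => ((M : Matrix.SpecialLinearGroup (Fin 2) ℝ) : Matrix (Fin 2) (Fin 2) ℝ) i j

lemma comm_coe (M : SL2) (s : ℤ) :
    ((⁅M, A ^ s⁆ : SL2) : Matrix (Fin 2) (Fin 2) ℝ) =
      !![1 - (s : ℝ) * (ent M 0 0) * (ent M 1 0),
          (s : ℝ) * ((ent M 0 0) ^ 2 - 1 + (s : ℝ) * (ent M 0 0) * (ent M 1 0));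
         -(s : ℝ) * (ent M 1 0) ^ 2,
          1 + (s : ℝ) * (ent M 0 0) * (ent M 1 0) + (s : ℝ) ^ 2 * (ent M 1 0) ^ 2] := by
  have hdet := det_rel M
  have e : ((⁅M, A ^ s⁆ : SL2) : Matrix (Fin 2) (Fin 2) ℝ) =
      (M : Matrix (Fin 2) (Fin 2) ℝ) * !![1, (s : ℝ); 0, 1] *
        adjugate (M : Matrix (Fin 2) (Fin 2) ℝ) * !![1, -(s : ℝ); 0, 1] := by
    rw [commutatorElement_def, ← _root_.zpow_neg]
    rw [Matrix.SpecialLinearGroup.coe_mul, Matrix.SpecialLinearGroup.coe_mul,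
      Matrix.SpecialLinearGroup.coe_mul, Matrix.SpecialLinearGroup.coe_inv,
      A_zpow, A_zpow]
    push_cast
    ring_nf
  rw [e, Matrix.eta_fin_two (M : Matrix (Fin 2) (Fin 2) ℝ), Matrix.adjugate_fin_two,
    Matrix.mul_fin_two, Matrix.mul_fin_two, Matrix.mul_fin_two]
  ext i j
  fin_cases i <;> fin_cases j <;> simp
  all_goals ring_nf
  all_goals try linear_combination hdet
  all_goals linear_combination (-(s:ℝ)) * hdet

lemma comm_entry10 (M : SL2) (s : ℤ) :
    ent (⁅M, A ^ s⁆) 1 0 = -(s : ℝ) * (ent M 1 0) ^ 2 := by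
  rw [comm_coe]; simp

lemma comm_trace (M : SL2) (s : ℤ) :
    ent (⁅M, A ^ s⁆) 0 0 + ent (⁅M, A ^ s⁆) 1 1
      = 2 + (s : ℝ) ^ 2 * (ent M 1 0) ^ 2 := by
  rw [comm_coe]; simp; ring

lemma infinite_order (M : SL2) (hc : ent M 1 0 ≠ 0)
    (ht : 2 < ent M 0 0 + ent M 1 1) (k : ℤ) (hk : k ≠ 0) : M ^ k ≠ 1 := by
  obtain ⟨a, b, c, dd, hM, hdet⟩ :
      ∃ a b c dd, ((M : SL2) : Matrix (Fin 2) (Fin 2) ℝ) = !![a, b; c, dd] ∧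
        a * dd - b * c = 1 := by
    refine ⟨_, _, _, _, Matrix.eta_fin_two _, ?_⟩
    simpa using det_rel M
  have hc' : c ≠ 0 := by
    intro h0; apply hc; rw [hM]; simp [h0]
  have ht' : 2 < a + dd := by
    have h0 : ent M 0 0 = a := by rw [hM]; simp
    have h1 : ent M 1 1 = dd := by rw [hM]; simp
    rw [h0, h1] at ht; exact ht
  obtain ⟨r, hr0, hr2⟩ : ∃ r : ℝ, 0 ≤ r ∧ r ^ 2 = (a + dd) ^ 2 - 4 :=
    ⟨Real.sqrt ((a + dd) ^ 2 - 4), Real.sqrt_nonneg _, Real.sq_sqrt (by nlinarith)⟩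
  obtain ⟨lam, hlamdef⟩ : ∃ l : ℝ, l = (a + dd + r) / 2 := ⟨_, rfl⟩
  have hlam1 : 1 < lam := by rw [hlamdef]; nlinarith
  have hquad : lam ^ 2 - (a + dd) * lam + 1 = 0 := by
    rw [hlamdef]; linear_combination hr2 / 4
  have heig : ((M : SL2) : Matrix (Fin 2) (Fin 2) ℝ) *ᵥ ![lam - dd, c]
      = lam • ![lam - dd, c] := by
    rw [hM]
    funext i
    fin_cases i <;> simp [Matrix.mulVec, dotProduct, Fin.sum_univ_two]
    all_goals ring_nf
    all_goals try ring
    all_goals try linear_combination - hquad - hdet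
    all_goals try linear_combination hquad + hdet
    all_goals try linear_combination hquad - hdet
    all_goals linear_combination - hquad + hdet
  have hpow : ∀ m : ℕ, ((M ^ m : SL2) : Matrix (Fin 2) (Fin 2) ℝ) *ᵥ ![lam - dd, c]
      = (lam ^ m) • ![lam - dd, c] := by
    intro m
    induction m with
    | zero => simp
    | succ m ih =>
        rw [pow_succ, Matrix.SpecialLinearGroup.coe_mul, ← Matrix.mulVec_mulVec, heig,
          Matrix.mulVec_smul, ih, smul_smul, ← _root_.pow_succ']
  intro hMk
  have hm0 : k.natAbs ≠ 0 := Int.natAbs_ne_zero.mpr hk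
  have hMn : (M : SL2) ^ (k.natAbs : ℕ) = 1 := by
    rcases Int.natAbs_eq k with h' | h'
    · rw [← zpow_natCast, ← h', hMk]
    · rw [← zpow_natCast]
      have hknat : ((k.natAbs : ℤ)) = -k := by omega
      rw [hknat, _root_.zpow_neg, hMk, inv_one]
  have h5 := hpow k.natAbs
  rw [hMn, Matrix.SpecialLinearGroup.coe_one, Matrix.one_mulVec] at h5
  have hcomp := congrFun h5 1
  simp only [Matrix.cons_val_one, Matrix.head_cons, Matrix.cons_val_zero, Pi.smul_apply, smul_eq_mul] at hcomp
  have hlm : lam ^ k.natAbs = 1 := by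
    have hz : (lam ^ k.natAbs - 1) * c = 0 := by linarith [hcomp]
    rcases mul_eq_zero.mp hz with h | h
    · linarith
    · exact absurd h hc'
  have hgt : 1 < lam ^ k.natAbs := one_lt_pow₀ hlam1 hm0
  rw [hlm] at hgt
  exact lt_irrefl _ hgt

/-! ### Free group side -/

def fa : FreeGroup (Fin 2) := FreeGroup.of 0
def fb : FreeGroup (Fin 2) := FreeGroup.of 1

def rho : FreeGroup (Fin 2) →* SL2 := FreeGroup.lift (fun i => if i = 0 then A else B)

lemma rho_a : rho fa = A := by simp [rho, fa]
lemma rho_b : rho fb = B := by simp [rho, fb]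

def chain : List ℤ → FreeGroup (Fin 2)
  | [] => fb
  | n :: L => ⁅chain L, fa ^ n⁆

lemma chain_eq_one {L : List ℤ} (h : ∃ n ∈ L, n = 0) : chain L = 1 := by
  induction L with
  | nil => simp at h
  | cons n L ih =>
      rcases h with ⟨m, hm, hm0⟩
      rcases List.mem_cons.mp hm with rfl | hmL
      · rw [chain, hm0, zpow_zero, commutatorElement_one_right]
      · rw [chain, ih ⟨m, hmL, hm0⟩, commutatorElement_one_left]

lemma chain_entry {L : List ℤ} (h : ∀ n ∈ L, n ≠ 0) :
    ent (rho (chain L)) 1 0 ≠ 0 := by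
  induction L with
  | nil =>
      rw [chain, rho_b]
      norm_num [B]
  | cons n L ih =>
      rw [chain, map_commutatorElement, map_zpow, rho_a, comm_entry10]
      have hn : (n : ℝ) ≠ 0 := Int.cast_ne_zero.mpr (h n List.mem_cons_self)
      have hc := ih (fun m hm => h m (List.mem_cons_of_mem n hm))
      exact mul_ne_zero (neg_ne_zero.mpr hn) (pow_ne_zero 2 hc)

lemma chain_zpow_ne_one {L : List ℤ} (h : ∀ n ∈ L, n ≠ 0) {k : ℤ} (hk : k ≠ 0) :
    chain L ^ k ≠ 1 := by
  intro h1
  cases L with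
  | nil =>
      have h2 : rho (chain [] ^ k) = 1 := by rw [h1, _root_.map_one]
      rw [map_zpow, chain, rho_b] at h2
      have h3 := congrArg (fun N : SL2 => ent N 1 0) h2
      simp only [B_zpow k, Matrix.SpecialLinearGroup.coe_one] at h3
      norm_num at h3
      exact hk h3
  | cons n L' =>
      have hMk : (rho (chain (n :: L'))) ^ k = 1 := by rw [← map_zpow, h1, _root_.map_one]
      have hcM : ent (rho (chain (n :: L'))) 1 0 ≠ 0 := chain_entry h
      have htr : 2 < ent (rho (chain (n :: L'))) 0 0 + ent (rho (chain (n :: L'))) 1 1 := by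
        have hrw : rho (chain (n :: L')) = ⁅rho (chain L'), A ^ n⁆ := by
          rw [chain, map_commutatorElement, map_zpow, rho_a]
        rw [hrw, comm_trace]
        have h1' : ent (rho (chain L')) 1 0 ≠ 0 :=
          chain_entry (fun m hm => h m (List.mem_cons_of_mem n hm))
        have hn : (n : ℝ) ≠ 0 := Int.cast_ne_zero.mpr (h n List.mem_cons_self)
        nlinarith [sq_nonneg ((n:ℝ) * ent (rho (chain L')) 1 0),
          mul_self_pos.mpr (mul_ne_zero hn h1')]
      exact infinite_order _ hcM htr k hk hMk

/-! ### The construction inside the direct power -/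

def XX (d : ℕ) : Fin d → FreeGroup (Fin 2) := fun _ => fa
def YY (d : ℕ) : Fin d → FreeGroup (Fin 2) := fun _ => fb
def ZZ (d : ℕ) : Fin d → FreeGroup (Fin 2) := fun j => fa ^ (j : ℕ)
def WW (d : ℕ) (m : Fin d) : Fin d → FreeGroup (Fin 2) := ZZ d * XX d ^ (-((m : ℕ) : ℤ))
def EE (d : ℕ) (L : List (Fin d)) : Fin d → FreeGroup (Fin 2) :=
  L.foldr (fun m g => ⁅g, WW d m⁆) (YY d)
noncomputable def Li (d : ℕ) (i : Fin d) : List (Fin d) := (Finset.univ.erase i).toList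
noncomputable def gg (d : ℕ) (i : Fin d) : FreeGroup (Fin 2) := EE d (Li d i) i

lemma EE_apply (d : ℕ) (L : List (Fin d)) (j : Fin d) :
    EE d L j = chain (L.map (fun m : Fin d => ((j : ℕ) : ℤ) - ((m : ℕ) : ℤ))) := by
  induction L with
  | nil => rfl
  | cons m L ih =>
      have hW : WW d m j = fa ^ (((j : ℕ) : ℤ) - ((m : ℕ) : ℤ)) := by
        show ZZ d j * (XX d) j ^ (-((m : ℕ) : ℤ)) = _
        show fa ^ (j : ℕ) * fa ^ (-((m : ℕ) : ℤ)) = _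
        rw [← zpow_natCast fa (j : ℕ), ← _root_.zpow_add, ← sub_eq_add_neg]
      have : EE d (m :: L) j = ⁅EE d L j, WW d m j⁆ := rfl
      rw [this, ih, hW, List.map_cons, chain]

lemma EE_mem (d : ℕ) (L : List (Fin d)) :
    EE d L ∈ Subgroup.closure {XX d, YY d, ZZ d} := by
  induction L with
  | nil =>
      have h0 : EE d [] = YY d := rfl
      rw [h0]
      exact Subgroup.subset_closure (by simp)
  | cons m L ih =>
      have hX : XX d ∈ Subgroup.closure {XX d, YY d, ZZ d} :=
        Subgroup.subset_closure (by simp)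
      have hZ : ZZ d ∈ Subgroup.closure {XX d, YY d, ZZ d} :=
        Subgroup.subset_closure (by simp)
      have hW : WW d m ∈ Subgroup.closure {XX d, YY d, ZZ d} :=
        mul_mem hZ (zpow_mem hX _)
      have : EE d (m :: L) = ⁅EE d L, WW d m⁆ := rfl
      rw [this, commutatorElement_def]
      exact mul_mem (mul_mem (mul_mem ih hW) (inv_mem ih)) (inv_mem hW)

lemma EE_off (d : ℕ) (i j : Fin d) (hji : j ≠ i) : EE d (Li d i) j = 1 := by
  rw [EE_apply]
  apply chain_eq_one
  refine ⟨0, ?_, rfl⟩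
  have hjmem : j ∈ Li d i :=
    Finset.mem_toList.mpr (Finset.mem_erase.mpr ⟨hji, Finset.mem_univ j⟩)
  exact List.mem_map.mpr ⟨j, hjmem, sub_self _⟩

lemma gg_zpow_ne_one (d : ℕ) (i : Fin d) {k : ℤ} (hk : k ≠ 0) : gg d i ^ k ≠ 1 := by
  have : gg d i = chain ((Li d i).map (fun m : Fin d => ((i : ℕ) : ℤ) - ((m : ℕ) : ℤ))) :=
    EE_apply d (Li d i) i
  rw [this]
  apply chain_zpow_ne_one _ hk
  intro n hn
  rcases List.mem_map.mp hn with ⟨m, hm, rfl⟩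
  have hmi : m ≠ i := (Finset.mem_erase.mp (Finset.mem_toList.mp hm)).1
  intro h0
  exact hmi (Fin.ext (by omega))

end Stmt11Aux

open Stmt11Aux

/-- For every `d` there is a 3-generated subgroup `H_d` of `𝔽₂^d` (the `d`-th
direct power of the free group of rank 2) containing a free abelian subgroup of rank `d`. -/
theorem stmt_11 (d : ℕ) :
    ∃ H : Subgroup (Fin d → FreeGroup (Fin 2)),
      (∃ S : Set (Fin d → FreeGroup (Fin 2)),
        S.Finite ∧ S.ncard ≤ 3 ∧ Subgroup.closure S = H) ∧
      ∃ ψ : (Fin d → Multiplicative ℤ) →* (Fin d → FreeGroup (Fin 2)),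
        Function.Injective ψ ∧ ψ.range ≤ H := by
  classical
  refine ⟨Subgroup.closure {XX d, YY d, ZZ d},
    ⟨{XX d, YY d, ZZ d}, Set.toFinite _, ?_, rfl⟩, ?_⟩
  · calc ({XX d, YY d, ZZ d} : Set (Fin d → FreeGroup (Fin 2))).ncard
        ≤ ({YY d, ZZ d} : Set (Fin d → FreeGroup (Fin 2))).ncard + 1 :=
          Set.ncard_insert_le _ _
      _ ≤ (({ZZ d} : Set (Fin d → FreeGroup (Fin 2))).ncard + 1) + 1 := by
          have := Set.ncard_insert_le (YY d) ({ZZ d} : Set (Fin d → FreeGroup (Fin 2)))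
          omega
      _ ≤ 3 := by rw [Set.ncard_singleton]
  · refine ⟨{ toFun := fun f j => gg d j ^ (Multiplicative.toAdd (f j)),
              map_one' := by funext j; simp,
              map_mul' := by
                intro f h
                funext j
                simp only [Pi.mul_apply, toAdd_mul]
                rw [_root_.zpow_add] }, ?_, ?_⟩
    · intro f h hfh
      funext j
      have hj := congrFun hfh j
      simp only [MonoidHom.coe_mk, OneHom.coe_mk] at hj
      by_contra hne
      have hsub : Multiplicative.toAdd (f j) - Multiplicative.toAdd (h j) ≠ 0 := by
        intro h0
        apply hne
        have : Multiplicative.toAdd (f j) = Multiplicative.toAdd (h j) := by omega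
        exact Multiplicative.toAdd.injective this
      apply gg_zpow_ne_one d j hsub
      rw [zpow_sub, hj, mul_inv_cancel]
    · rintro x ⟨f, rfl⟩
      show (fun j => gg d j ^ (Multiplicative.toAdd (f j))) ∈ _
      have key : (fun j => gg d j ^ (Multiplicative.toAdd (f j)))
          = ((List.finRange d).map
              (fun i => EE d (Li d i) ^ (Multiplicative.toAdd (f i)))).prod := by
        funext j
        have h1 : (((List.finRange d).map
            (fun i => EE d (Li d i) ^ (Multiplicative.toAdd (f i)))).prod) j
            = ((List.finRange d).map
                (fun i => (EE d (Li d i) j) ^ (Multiplicative.toAdd (f i)))).prod := by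
          have h2 := map_list_prod (Pi.evalMonoidHom (fun _ : Fin d => FreeGroup (Fin 2)) j)
            ((List.finRange d).map (fun i => EE d (Li d i) ^ (Multiplicative.toAdd (f i))))
          rw [List.map_map] at h2
          exact h2
        rw [h1, List.prod_map_eq_pow_single j
          (fun i => (EE d (Li d i) j) ^ (Multiplicative.toAdd (f i))) ?hone]
        case hone =>
          intro i hij _
          simp only [EE_off d i j (Ne.symm hij), one_zpow]
        rw [List.count_eq_one_of_mem (List.nodup_finRange d) (List.mem_finRange j), pow_one]
        rfl
      rw [key]
      apply Subgroup.list_prod_mem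
      intro x hx
      rcases List.mem_map.mp hx with ⟨i, _, rfl⟩
      exact zpow_mem (EE_mem d (Li d i)) _
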